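/- arXiv:1901.00384 — 3 statements merged into one kernel-verified Lean document; each statement's English description precedes it below -/
import Mathlib

section
/- Let r ≥ 1 and let Σ ⊆ ℝ^r be a subsemigroup such that the ℝ-linear span of Σ equals ℝ^r and the ℚ-linear span of Σ (the ℚ-vector subspace of ℝ^r generated by Σ) has dimension r over ℚ. Let δ : Σ → ℤ be an additive map (δ(σ + τ) = δ(σ) + δ(τ) for all σ, τ ∈ Σ). Then there exists a unique ℝ-linear form φ : ℝ^r → ℝ with φ(σ) = δ(σ) for every σ ∈ Σ. -/
theorem stmt13 (r : ℕ) (hr : 1 ≤ r) (S : Set (Fin r → ℝ)) (hne : S.Nonempty)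
    (hadd : ∀ x ∈ S, ∀ y ∈ S, x + y ∈ S)
    (hspanR : Submodule.span ℝ S = ⊤)
    (hspanQ : Module.finrank ℚ ↥(Submodule.span ℚ S) = r)
    (δ : (Fin r → ℝ) → ℤ)
    (hδ : ∀ x ∈ S, ∀ y ∈ S, δ (x + y) = δ x + δ y) :
    ∃! φ : (Fin r → ℝ) →ₗ[ℝ] ℝ, ∀ x ∈ S, φ x = (δ x : ℝ) := by
  classical
  -- Step A: additivity helpers
  have hδ2 : ∀ x ∈ S, ∀ y ∈ S, ∀ c : ℕ,
      (x + (c : ℝ) • y) ∈ S ∧ δ (x + (c : ℝ) • y) = δ x + c * δ y := by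
    intro x hx y hy c
    induction c with
    | zero =>
      refine ⟨?_, ?_⟩ <;> simp [hx]
    | succ n ih =>
      have h1 : x + ((n + 1 : ℕ) : ℝ) • y = (x + (n : ℝ) • y) + y := by
        push_cast
        rw [add_smul, one_smul, add_assoc]
      constructor
      · rw [h1]; exact hadd _ ih.1 _ hy
      · rw [h1, hδ _ ih.1 _ hy, ih.2]; push_cast; ring
  have hkey : ∀ (t : Finset (Fin r)) (u : Fin r → (Fin r → ℝ)), (∀ i, u i ∈ S) →
      ∀ (c : Fin r → ℕ), ∀ x ∈ S,
      (x + ∑ i ∈ t, (c i : ℝ) • u i) ∈ S ∧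
        δ (x + ∑ i ∈ t, (c i : ℝ) • u i) = δ x + ∑ i ∈ t, (c i : ℤ) * δ (u i) := by
    intro t u hu c
    induction t using Finset.induction_on with
    | empty =>
      intro x hx
      refine ⟨?_, ?_⟩ <;> simp [hx]
    | @insert a t ha ih =>
      intro x hx
      have hx' := hδ2 x hx (u a) (hu a) (c a)
      have h1 : x + ∑ i ∈ insert a t, (c i : ℝ) • u i
          = (x + (c a : ℝ) • u a) + ∑ i ∈ t, (c i : ℝ) • u i := by
        rw [Finset.sum_insert ha, ← add_assoc]
      obtain ⟨hmem, hval⟩ := ih (x + (c a : ℝ) • u a) hx'.1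
      refine ⟨by rw [h1]; exact hmem, ?_⟩
      rw [h1, hval, hx'.2, Finset.sum_insert ha]; ring
  -- Step B: the core integer identity
  have hcore : ∀ (u : Fin r → (Fin r → ℝ)), (∀ i, u i ∈ S) → ∀ x ∈ S,
      ∀ (n : ℕ) (m : Fin r → ℤ), 0 < n →
      (n : ℝ) • x = ∑ i, (m i : ℝ) • u i →
      (n : ℤ) * δ x = ∑ i, m i * δ (u i) := by
    intro u hu x hx n m hn heq
    set p : Fin r → ℕ := fun i => (m i).toNat with hp
    set q : Fin r → ℕ := fun i => (-(m i)).toNat with hq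
    have hmi : ∀ i, (m i : ℝ) = (p i : ℝ) - (q i : ℝ) := by
      intro i
      have : ((p i : ℤ) - (q i : ℤ)) = m i := by simp only [hp, hq]; omega
      have := congrArg (fun z : ℤ => (z : ℝ)) this
      push_cast at this
      linarith
    have hveq : (x + (n : ℝ) • x) + ∑ i, (q i : ℝ) • u i = x + ∑ i, (p i : ℝ) • u i := by
      rw [add_assoc, heq, ← Finset.sum_add_distrib]
      congr 1
      apply Finset.sum_congr rfl
      intro i _
      rw [← add_smul, hmi i]
      ring_nf
    have hxn := hδ2 x hx x hx n
    have hL := hkey Finset.univ u hu q (x + (n : ℝ) • x) hxn.1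
    have hR := hkey Finset.univ u hu p x hx
    have hδeq : δ ((x + (n : ℝ) • x) + ∑ i, (q i : ℝ) • u i)
        = δ (x + ∑ i, (p i : ℝ) • u i) := by rw [hveq]
    rw [hL.2, hR.2, hxn.2] at hδeq
    have hpq : ∀ i, (p i : ℤ) - (q i : ℤ) = m i := by intro i; simp only [hp, hq]; omega
    have : (n : ℤ) * δ x = ∑ i, ((p i : ℤ) - (q i : ℤ)) * δ (u i) := by
      have hsub : ∑ i, ((p i : ℤ) - (q i : ℤ)) * δ (u i)
          = ∑ i, (p i : ℤ) * δ (u i) - ∑ i, (q i : ℤ) * δ (u i) := by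
        rw [← Finset.sum_sub_distrib]
        apply Finset.sum_congr rfl
        intro i _; ring
      rw [hsub]; omega
    rw [this]
    exact Finset.sum_congr rfl fun i _ => by rw [hpq i]
  -- Step C: construct a basis of ℝ^r made of elements of S
  set N : Submodule ℚ (Fin r → ℝ) := Submodule.span ℚ S with hN
  have hSN : S ⊆ (N : Set (Fin r → ℝ)) := Submodule.subset_span
  haveI : FiniteDimensional ℚ N := by
    apply FiniteDimensional.of_finrank_pos
    rw [hspanQ]; omega
  set T : Set N := Subtype.val ⁻¹' S with hT
  have hTspan : Submodule.span ℚ T = ⊤ := by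
    apply Submodule.map_injective_of_injective N.injective_subtype
    rw [Submodule.map_span, Submodule.map_top, Submodule.range_subtype,
      Submodule.coe_subtype]
    have himg : Subtype.val '' T = S := by
      ext z
      constructor
      · rintro ⟨⟨z', hz'⟩, hz'S, rfl⟩; exact hz'S
      · intro hz; exact ⟨⟨z, hSN hz⟩, hz, rfl⟩
    rw [himg, hN]
  obtain ⟨b, hbT, hbspan, hbind⟩ := exists_linearIndependent ℚ T
  have hbtop : Submodule.span ℚ (Set.range ((↑) : b → N)) = ⊤ := by
    rw [Subtype.range_coe, hbspan, hTspan]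
  let B0 : Module.Basis b ℚ N := Module.Basis.mk hbind (le_of_eq hbtop.symm)
  haveI : Fintype b := FiniteDimensional.fintypeBasisIndex B0
  have hcard : Fintype.card b = r := by
    rw [← Module.finrank_eq_card_basis B0, hN, hspanQ]
  let e : Fin r ≃ b := (Fintype.equivFinOfCardEq hcard).symm
  let B : Module.Basis (Fin r) ℚ N := B0.reindex e.symm
  set v : Fin r → (Fin r → ℝ) := fun i => ((e i : N) : Fin r → ℝ) with hv
  have hvS : ∀ i, v i ∈ S := fun i => hbT (e i).2
  have hBv : ∀ i, ((B i : N) : Fin r → ℝ) = v i := by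
    intro i
    simp only [B, Module.Basis.reindex_apply, Equiv.symm_symm, B0, Module.Basis.mk_apply, hv]
  -- every element of S is a ℚ-combination of v
  have hcomb : ∀ x ∈ S, ∃ c : Fin r → ℚ, x = ∑ i, (c i : ℝ) • v i := by
    intro x hx
    have hxN : x ∈ N := hSN hx
    set y : N := ⟨x, hxN⟩ with hy
    refine ⟨fun i => B.repr y i, ?_⟩
    have h2 : x = ((∑ i, B.repr y i • B i : N) : Fin r → ℝ) := by
      rw [B.sum_repr y]
    rw [h2, AddSubmonoidClass.coe_finset_sum]
    apply Finset.sum_congr rfl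
    intro i _
    rw [SetLike.val_smul, hBv i, ← algebraMap_smul ℝ (B.repr y i) (v i)]
    norm_num
  -- v spans ℝ^r over ℝ
  have hvspan : ⊤ ≤ Submodule.span ℝ (Set.range v) := by
    rw [← hspanR]
    apply Submodule.span_le.2
    intro x hx
    obtain ⟨c, hc⟩ := hcomb x hx
    rw [hc]
    exact Submodule.sum_mem _ fun i _ =>
      Submodule.smul_mem _ _ (Submodule.subset_span ⟨i, rfl⟩)
  let Bv : Module.Basis (Fin r) ℝ (Fin r → ℝ) :=
    basisOfTopLeSpanOfCardEqFinrank v hvspan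
      (by rw [Fintype.card_fin, Module.finrank_fin_fun])
  set φ : (Fin r → ℝ) →ₗ[ℝ] ℝ := Bv.constr ℝ (fun i => (δ (v i) : ℝ)) with hφ
  have hφv : ∀ i, φ (v i) = (δ (v i) : ℝ) := by
    intro i
    have hbv : Bv i = v i := congrFun (coe_basisOfTopLeSpanOfCardEqFinrank v _ _) i
    have h := Bv.constr_basis ℝ (fun j => (δ (v j) : ℝ)) i
    rw [hbv] at h
    exact h
  -- Step D: φ agrees with δ on S
  have hmain : ∀ x ∈ S, φ x = (δ x : ℝ) := by
    intro x hx
    obtain ⟨c, hc⟩ := hcomb x hx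
    -- common denominator
    set n : ℕ := ∏ i, (c i).den with hn
    have hnpos : 0 < n := Finset.prod_pos fun i _ => (c i).pos
    have hint : ∀ i, ∃ m : ℤ, (m : ℚ) = c i * n := by
      intro i
      obtain ⟨t, ht⟩ : (c i).den ∣ n := Finset.dvd_prod_of_mem _ (Finset.mem_univ i)
      refine ⟨(c i).num * t, ?_⟩
      rw [ht]
      push_cast
      rw [← mul_assoc, Rat.mul_den_eq_num]
    choose m hm using hint
    have heq : (n : ℝ) • x = ∑ i, (m i : ℝ) • v i := by
      rw [hc, Finset.smul_sum]
      apply Finset.sum_congr rfl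
      intro i _
      rw [smul_smul]
      congr 1
      have := congrArg (fun z : ℚ => (z : ℝ)) (hm i)
      push_cast at this
      rw [this]; ring
    have hZ := hcore v hvS x hx n m hnpos heq
    -- cast to ℝ and divide by n
    have hR : (n : ℝ) * (δ x : ℝ) = ∑ i, (m i : ℝ) * (δ (v i) : ℝ) := by
      have := congrArg (fun z : ℤ => (z : ℝ)) hZ
      push_cast at this
      exact this
    have hφx : φ x = ∑ i, (c i : ℝ) * (δ (v i) : ℝ) := by
      rw [hc, map_sum]
      apply Finset.sum_congr rfl
      intro i _
      rw [map_smul, hφv i, smul_eq_mul]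
    have hmc : ∀ i, (m i : ℝ) = (c i : ℝ) * n := by
      intro i
      have := congrArg (fun z : ℚ => (z : ℝ)) (hm i)
      push_cast at this
      exact this
    have hn0 : (n : ℝ) ≠ 0 := by positivity
    rw [hφx]
    have : (n : ℝ) * (δ x : ℝ) = (n : ℝ) * ∑ i, (c i : ℝ) * (δ (v i) : ℝ) := by
      rw [hR, Finset.mul_sum]
      apply Finset.sum_congr rfl
      intro i _
      rw [hmc i]; ring
    rw [mul_eq_mul_left_iff, Nat.cast_eq_zero] at this
    rcases this with h | h
    · exact h.symm
    · exact absurd h hnpos.ne'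
  refine ⟨φ, hmain, ?_⟩
  intro ψ hψ
  apply LinearMap.ext_on hspanR
  intro x hx
  rw [hψ x hx, hmain x hx]
end

section
/- Let M be a commutative monoid, r ≥ 1, and let ι₁, ι₂ : M → ℝ^r be injective additive maps such that, for both j = 1, 2, the ℝ-linear span of ι_j(M) equals ℝ^r and the ℚ-linear span of ι_j(M) has dimension r over ℚ. Then there is a unique linear automorphism T of ℝ^r with T(ι₁(σ)) = ι₂(σ) for every σ ∈ M. Consequently, if deg : M → ℤ is an additive map and φ_j : ℝ^r → ℝ denotes the unique linear form with φ_j ∘ ι_j = deg (j = 1, 2), then ι₁(M) is linearly bounded with respect to φ₁ if and only if ι₂(M) is linearly bounded with respect to φ₂. -/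
/-- The set of nonnegative real linear combinations of the vectors `v i`. -/
def NonnegSpan {r : ℕ} (v : Fin r → (Fin r → ℝ)) : Set (Fin r → ℝ) :=
  {x | ∃ c : Fin r → ℝ, (∀ i, 0 ≤ c i) ∧ x = ∑ i, c i • v i}

/-- Linear boundedness of a subset of `ℝ^r` with respect to a linear form `φ`: containment
in the nonnegative span of a basis consisting of vectors on which `φ` is positive. -/
def LinBddWrt {r : ℕ} (φ : (Fin r → ℝ) →ₗ[ℝ] ℝ) (S : Set (Fin r → ℝ)) : Prop :=
  ∃ v : Fin r → (Fin r → ℝ), LinearIndependent ℝ v ∧ (∀ i, 0 < φ (v i)) ∧ S ⊆ NonnegSpan v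

section helpers
open Submodule
variable {M : Type*} [AddCommMonoid M]


lemma transfer_rel {M : Type*} [AddCommMonoid M] {r : ℕ}
    (f₁ f₂ : M →+ (Fin r → ℝ)) (hinj : Function.Injective f₁)
    {n : ℕ} (q : Fin n → ℚ) (σs : Fin n → M) (σ : M)
    (h : f₁ σ = ∑ i, (q i : ℝ) • f₁ (σs i)) :
    f₂ σ = ∑ i, (q i : ℝ) • f₂ (σs i) := by
  classical
  set d : ℕ := ∏ i, (q i).den with hd
  have hd0 : 0 < d := Finset.prod_pos (fun i _ => (q i).pos)
  have hdR : (d : ℝ) ≠ 0 := Nat.cast_ne_zero.mpr hd0.ne'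
  set c : Fin n → ℤ := fun i => (q i).num * ((d / (q i).den : ℕ) : ℤ) with hcdef
  have hc : ∀ i, ((c i : ℝ)) = (d : ℝ) * (q i : ℝ) := by
    intro i
    obtain ⟨k, hk⟩ : (q i).den ∣ d := Finset.dvd_prod_of_mem _ (Finset.mem_univ i)
    have hden : ((q i).den : ℝ) ≠ 0 := Nat.cast_ne_zero.mpr (q i).den_nz
    have hdiv : d / (q i).den = k := by rw [hk]; exact Nat.mul_div_cancel_left k (q i).pos
    rw [hcdef]
    simp only [hdiv]
    push_cast
    rw [Rat.cast_def, hk]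
    push_cast
    field_simp
  set a : Fin n → ℕ := fun i => (c i).toNat with hadef
  set b : Fin n → ℕ := fun i => (-(c i)).toNat with hbdef
  have hab : ∀ i, (a i : ℝ) = (b i : ℝ) + (c i : ℝ) := by
    intro i
    have h0 : (a i : ℤ) - (b i : ℤ) = c i := Int.toNat_sub_toNat_neg (c i)
    have hz : (a i : ℤ) = (b i : ℤ) + c i := by omega
    exact_mod_cast congrArg (fun z : ℤ => (z : ℝ)) hz
  -- key step for any g
  have key : ∀ g : M →+ (Fin r → ℝ), g σ = ∑ i, (q i : ℝ) • g (σs i) →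
      g (d • σ + ∑ i, b i • σs i) = g (∑ i, a i • σs i) := by
    intro g hg
    rw [map_add, map_nsmul, map_sum, map_sum]
    simp only [map_nsmul]
    have : ∀ (m : ℕ) (v : Fin r → ℝ), m • v = (m : ℝ) • v := fun m v =>
      (Nat.cast_smul_eq_nsmul ℝ m v).symm
    rw [this]
    simp only [this]
    rw [hg, Finset.smul_sum, ← Finset.sum_add_distrib]
    refine Finset.sum_congr rfl fun i _ => ?_
    rw [smul_smul, ← hc i, ← add_smul, add_comm, ← hab i]
  have heqM : d • σ + ∑ i, b i • σs i = ∑ i, a i • σs i := hinj (key f₁ h)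
  -- reverse direction for f₂
  have h2 := congrArg f₂ heqM
  rw [map_add, map_nsmul, map_sum, map_sum] at h2
  simp only [map_nsmul] at h2
  have hns : ∀ (m : ℕ) (v : Fin r → ℝ), m • v = (m : ℝ) • v := fun m v =>
    (Nat.cast_smul_eq_nsmul ℝ m v).symm
  simp only [hns] at h2
  have h3 : (d : ℝ) • f₂ σ = ∑ i, (c i : ℝ) • f₂ (σs i) := by
    have : ∀ i, (a i : ℝ) • f₂ (σs i) = (b i : ℝ) • f₂ (σs i) + (c i : ℝ) • f₂ (σs i) := by
      intro i; rw [← add_smul, ← hab i]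
    rw [Finset.sum_congr rfl (fun i _ => this i), Finset.sum_add_distrib] at h2
    exact add_right_cancel (by linear_combination (norm := module) h2)
  have h4 : (d : ℝ) • f₂ σ = (d : ℝ) • ∑ i, (q i : ℝ) • f₂ (σs i) := by
    rw [h3, Finset.smul_sum]
    exact Finset.sum_congr rfl fun i _ => by rw [smul_smul, ← hc i]
  exact smul_right_injective _ hdR h4


lemma qsmul_eq {r : ℕ} (q : ℚ) (v : Fin r → ℝ) : q • v = (q : ℝ) • v := by
  funext i; simp [Rat.smul_def]

lemma exists_equiv {M : Type*} [AddCommMonoid M] {r : ℕ} (hr : 1 ≤ r)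
    (f₁ f₂ : M →+ (Fin r → ℝ)) (hinj₁ : Function.Injective f₁)
    (htr : ∀ {n : ℕ} (q : Fin n → ℚ) (σs : Fin n → M) (σ : M),
      f₁ σ = ∑ i, (q i : ℝ) • f₁ (σs i) → f₂ σ = ∑ i, (q i : ℝ) • f₂ (σs i))
    (hspanR₁ : span ℝ (Set.range ⇑f₁) = ⊤) (hspanR₂ : span ℝ (Set.range ⇑f₂) = ⊤)
    (hQ₁ : Module.finrank ℚ (span ℚ (Set.range ⇑f₁)) = r) :
    ∃ T : (Fin r → ℝ) ≃ₗ[ℝ] (Fin r → ℝ), ∀ σ, T (f₁ σ) = f₂ σ := by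
  classical
  set W := span ℚ (Set.range ⇑f₁) with hW
  haveI : FiniteDimensional ℚ W := FiniteDimensional.of_finrank_pos (by omega)
  obtain ⟨bs, hbsub, hbspan, hbind⟩ := exists_linearIndependent ℚ (Set.range ⇑f₁)
  have hmem : ∀ x : bs, (x : Fin r → ℝ) ∈ W := fun x => by
    rw [hW, ← hbspan]; exact subset_span x.2
  let g : bs → W := fun x => ⟨x, hmem x⟩
  have hgind : LinearIndependent ℚ g := by
    apply LinearIndependent.of_comp W.subtype
    exact hbind
  have hgspan : span ℚ (Set.range g) = ⊤ := by
    apply Submodule.map_injective_of_injective W.injective_subtype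
    rw [Submodule.map_span, Submodule.map_top, Submodule.range_subtype]
    rw [← Set.range_comp]
    have hcg : ⇑W.subtype ∘ g = (Subtype.val : bs → (Fin r → ℝ)) := rfl
    rw [hcg, Subtype.range_coe, hbspan]
  let B : Module.Basis bs ℚ W := Module.Basis.mk hgind hgspan.ge
  haveI : Fintype bs := FiniteDimensional.fintypeBasisIndex B
  have hcard : Fintype.card bs = r := by
    have := Module.finrank_eq_card_basis B
    omega
  let ε : Fin r ≃ bs := (Fintype.equivFinOfCardEq hcard).symm
  let e : Fin r → (Fin r → ℝ) := fun i => (ε i : Fin r → ℝ)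
  have hrange_e : Set.range e = bs := by
    have : e = Subtype.val ∘ ε := rfl
    rw [this, Set.range_comp, Equiv.range_eq_univ, Set.image_univ, Subtype.range_coe]
  have hτ : ∀ i, ∃ σ, f₁ σ = e i := fun i => hbsub (ε i).2
  choose τ hτ using hτ
  have hcoef : ∀ σ, ∃ q : Fin r → ℚ, f₁ σ = ∑ i, (q i : ℝ) • e i := by
    intro σ
    have hx : f₁ σ ∈ span ℚ (Set.range e) := by
      rw [hrange_e, hbspan, ← hW]; exact subset_span (Set.mem_range_self σ)
    obtain ⟨qq, hqq⟩ := (mem_span_range_iff_exists_fun ℚ).mp hx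
    exact ⟨qq, by rw [← hqq]; exact Finset.sum_congr rfl fun i _ => (qsmul_eq _ _).symm ▸ rfl⟩
  have htrans : ∀ σ (q : Fin r → ℚ), f₁ σ = ∑ i, (q i : ℝ) • e i →
      f₂ σ = ∑ i, (q i : ℝ) • f₂ (τ i) := by
    intro σ q hq
    refine htr q τ σ ?_
    rw [hq]
    exact Finset.sum_congr rfl fun i _ => by rw [hτ i]
  have he_span : ⊤ ≤ span ℝ (Set.range e) := by
    rw [← hspanR₁]
    apply span_le.mpr
    rintro x ⟨σ, rfl⟩
    obtain ⟨q, hq⟩ := hcoef σ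
    rw [hq]
    exact sum_mem fun i _ => smul_mem _ _ (subset_span (Set.mem_range_self i))
  set f : Fin r → (Fin r → ℝ) := fun i => f₂ (τ i) with hfdef
  have hf_span : ⊤ ≤ span ℝ (Set.range f) := by
    rw [← hspanR₂]
    apply span_le.mpr
    rintro x ⟨σ, rfl⟩
    obtain ⟨q, hq⟩ := hcoef σ
    rw [htrans σ q hq]
    exact sum_mem fun i _ => smul_mem _ _ (subset_span (Set.mem_range_self i))
  have hcards : Fintype.card (Fin r) = Module.finrank ℝ (Fin r → ℝ) := by
    simp [Module.finrank_fin_fun]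
  let B₁ := basisOfTopLeSpanOfCardEqFinrank e he_span hcards
  let B₂ := basisOfTopLeSpanOfCardEqFinrank f hf_span hcards
  refine ⟨B₁.equiv B₂ (Equiv.refl _), fun σ => ?_⟩
  have hTe : ∀ i, (B₁.equiv B₂ (Equiv.refl _)) (e i) = f i := by
    intro i
    have h1 : B₁ i = e i := congrFun (coe_basisOfTopLeSpanOfCardEqFinrank e he_span hcards) i
    have h2 : B₂ i = f i := congrFun (coe_basisOfTopLeSpanOfCardEqFinrank f hf_span hcards) i
    have := B₁.equiv_apply i B₂ (Equiv.refl _)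
    simp only [Equiv.refl_apply] at this
    rw [h1, h2] at this
    exact this
  obtain ⟨q, hq⟩ := hcoef σ
  rw [hq, map_sum, htrans σ q hq]
  simp only [map_smul]
  exact Finset.sum_congr rfl fun i _ => by rw [hTe i]


lemma bdd_transfer {r : ℕ} (ι₁ ι₂ : M → (Fin r → ℝ))
    (T : (Fin r → ℝ) ≃ₗ[ℝ] (Fin r → ℝ)) (hT : ∀ σ, T (ι₁ σ) = ι₂ σ)
    (hspanR₁ : span ℝ (Set.range ι₁) = ⊤)
    (φ₁ φ₂ : (Fin r → ℝ) →ₗ[ℝ] ℝ) (hφ : ∀ σ, φ₂ (ι₂ σ) = φ₁ (ι₁ σ))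
    (hb : LinBddWrt φ₁ (Set.range ι₁)) : LinBddWrt φ₂ (Set.range ι₂) := by
  have hcomp : φ₂.comp (T : (Fin r → ℝ) →ₗ[ℝ] (Fin r → ℝ)) = φ₁ :=
    LinearMap.ext_on hspanR₁ (by rintro x ⟨σ, rfl⟩; simp [hT, hφ])
  have hcomp' : ∀ x, φ₂ (T x) = φ₁ x := fun x => LinearMap.congr_fun hcomp x
  obtain ⟨v, hvind, hvpos, hvsub⟩ := hb
  refine ⟨fun i => T (v i), ?_, ?_, ?_⟩
  · exact hvind.map' (T : (Fin r → ℝ) →ₗ[ℝ] (Fin r → ℝ)) T.ker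
  · intro i; rw [hcomp']; exact hvpos i
  · rintro x ⟨σ, rfl⟩
    obtain ⟨c, hc, hsum⟩ := hvsub (Set.mem_range_self σ)
    exact ⟨c, hc, by rw [← hT, hsum, map_sum]; simp⟩

end helpers

theorem stmt14 {M : Type*} [AddCommMonoid M] (r : ℕ) (hr : 1 ≤ r)
    (ι₁ ι₂ : M → (Fin r → ℝ))
    (hadd₁ : ∀ a b : M, ι₁ (a + b) = ι₁ a + ι₁ b)
    (hadd₂ : ∀ a b : M, ι₂ (a + b) = ι₂ a + ι₂ b)
    (hinj₁ : Function.Injective ι₁) (hinj₂ : Function.Injective ι₂)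
    (hspanR₁ : Submodule.span ℝ (Set.range ι₁) = ⊤)
    (hspanR₂ : Submodule.span ℝ (Set.range ι₂) = ⊤)
    (hspanQ₁ : Module.finrank ℚ ↥(Submodule.span ℚ (Set.range ι₁)) = r)
    (hspanQ₂ : Module.finrank ℚ ↥(Submodule.span ℚ (Set.range ι₂)) = r) :
    (∃! T : (Fin r → ℝ) ≃ₗ[ℝ] (Fin r → ℝ), ∀ σ : M, T (ι₁ σ) = ι₂ σ) ∧
    ∀ deg : M → ℤ, (∀ a b : M, deg (a + b) = deg a + deg b) →
      ∀ φ₁ φ₂ : (Fin r → ℝ) →ₗ[ℝ] ℝ,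
        (∀ σ : M, φ₁ (ι₁ σ) = (deg σ : ℝ)) → (∀ σ : M, φ₂ (ι₂ σ) = (deg σ : ℝ)) →
        (LinBddWrt φ₁ (Set.range ι₁) ↔ LinBddWrt φ₂ (Set.range ι₂)) := by
  have hz₁ : ι₁ 0 = 0 := by
    have h := hadd₁ 0 0
    rw [add_zero] at h
    exact left_eq_add.mp h
  have hz₂ : ι₂ 0 = 0 := by
    have h := hadd₂ 0 0
    rw [add_zero] at h
    exact left_eq_add.mp h
  let f₁ : M →+ (Fin r → ℝ) := ⟨⟨ι₁, hz₁⟩, hadd₁⟩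
  let f₂ : M →+ (Fin r → ℝ) := ⟨⟨ι₂, hz₂⟩, hadd₂⟩
  have hc₁ : ⇑f₁ = ι₁ := rfl
  have hc₂ : ⇑f₂ = ι₂ := rfl
  obtain ⟨T, hT⟩ := exists_equiv hr f₁ f₂ hinj₁
    (fun {n} q σs σ h => transfer_rel f₁ f₂ hinj₁ q σs σ h)
    hspanR₁ hspanR₂ hspanQ₁
  have hT : ∀ σ, T (ι₁ σ) = ι₂ σ := hT
  have hTsymm : ∀ σ, T.symm (ι₂ σ) = ι₁ σ := fun σ => by
    rw [← hT σ, LinearEquiv.symm_apply_apply]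
  constructor
  · refine ⟨T, hT, fun T' hT' => ?_⟩
    apply LinearEquiv.toLinearMap_injective
    apply LinearMap.ext_on hspanR₁
    rintro x ⟨σ, rfl⟩
    simp [hT, hT']
  · intro deg hdeg φ₁ φ₂ hφ₁ hφ₂
    constructor
    · exact bdd_transfer ι₁ ι₂ T hT hspanR₁ φ₁ φ₂ (fun σ => by rw [hφ₁, hφ₂])
    · exact bdd_transfer ι₂ ι₁ T.symm hTsymm hspanR₂ φ₂ φ₁ (fun σ => by rw [hφ₁, hφ₂])
end

section
/- Let V be a finite-dimensional real vector space and Σ ⊆ V a linearly graded, linearly bounded subsemigroup such that the subgroup ⟨Σ⟩_ℤ generated by Σ is a discrete subgroup of V spanning the linear span ⟨Σ⟩_ℝ of Σ (a lattice in ⟨Σ⟩_ℝ). Then Σ is asymptotically convex: for every σ ∈ ⟨Σ⟩_ℤ lying in the interior of the closure of cone(Σ), there is a positive integer k with kσ ∈ Σ. -/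
/-- The cone generated by a subset of a real vector space. -/
def coneGen {V : Type*} [AddCommMonoid V] [Module ℝ V] (S : Set V) : Set V :=
  {x | ∃ (m : ℕ) (c : Fin m → ℝ) (y : Fin m → V),
    (∀ i, 0 ≤ c i) ∧ (∀ i, y i ∈ S) ∧ x = ∑ i, c i • y i}

/-- Linear boundedness: containment in the nonnegative span of a basis of vectors of
positive degree. -/
def LinBddV {V : Type*} [AddCommGroup V] [Module ℝ V]
    (deg : V →ₗ[ℝ] ℝ) (S : Set V) : Prop :=
  ∃ v : Fin (Module.finrank ℝ V) → V, LinearIndependent ℝ v ∧ (∀ i, 0 < deg (v i)) ∧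
    S ⊆ {x | ∃ c : Fin (Module.finrank ℝ V) → ℝ, (∀ i, 0 ≤ c i) ∧ x = ∑ i, c i • v i}

open Finset Submodule Matrix

section ConeLemmas

variable {V : Type*} [AddCommMonoid V] [Module ℝ V] {S : Set V}

lemma stmt17aux_mem_coneGen {x : V} (hx : x ∈ S) : x ∈ coneGen S :=
  ⟨1, fun _ => 1, fun _ => x, fun _ => zero_le_one, fun _ => hx, by simp⟩

lemma stmt17aux_coneGen_smul {t : ℝ} (ht : 0 ≤ t) {x : V} (hx : x ∈ coneGen S) :
    t • x ∈ coneGen S := by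
  obtain ⟨m, c, y, hc, hy, rfl⟩ := hx
  exact ⟨m, fun i => t * c i, y, fun i => mul_nonneg ht (hc i), hy,
    by rw [Finset.smul_sum]; simp [smul_smul]⟩

lemma stmt17aux_coneGen_add {x y : V} (hx : x ∈ coneGen S) (hy : y ∈ coneGen S) :
    x + y ∈ coneGen S := by
  obtain ⟨m, c, u, hc, hu, rfl⟩ := hx
  obtain ⟨n, d, w, hd, hw, rfl⟩ := hy
  refine ⟨m + n, Fin.append c d, Fin.append u w, fun i => ?_, fun i => ?_, ?_⟩
  · refine Fin.addCases (fun j => ?_) (fun j => ?_) i <;>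
      simp [Fin.append_left, Fin.append_right, hc _, hd _]
  · refine Fin.addCases (fun j => ?_) (fun j => ?_) i <;>
      simp [Fin.append_left, Fin.append_right, hu _, hw _]
  · rw [Fin.sum_univ_add]
    simp [Fin.append_left, Fin.append_right]

lemma stmt17aux_coneGen_convex : Convex ℝ (coneGen S) :=
  fun _ hx _ hy _ _ ha hb _ =>
    stmt17aux_coneGen_add (stmt17aux_coneGen_smul ha hx) (stmt17aux_coneGen_smul hb hy)

lemma stmt17aux_nsmul_mem {S : Set V} (hadd : ∀ x ∈ S, ∀ y ∈ S, x + y ∈ S)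
    {x : V} (hx : x ∈ S) : ∀ {n : ℕ}, 0 < n → n • x ∈ S := by
  intro n hn
  induction n with
  | zero => exact absurd hn (lt_irrefl 0)
  | succ k ih =>
    rcases Nat.eq_zero_or_pos k with hk | hk
    · subst hk; simpa using hx
    · rw [succ_nsmul]; exact hadd _ (ih hk) _ hx

lemma stmt17aux_sum_nsmul_mem {S : Set V} (hadd : ∀ x ∈ S, ∀ y ∈ S, x + y ∈ S) :
    ∀ {m : ℕ} (u : Fin m → V) (n : Fin m → ℕ),
      (∀ l, u l ∈ S) → (∃ l, 0 < n l) → ∑ l, n l • u l ∈ S := by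
  intro m
  induction m with
  | zero => rintro u n hu ⟨l, -⟩; exact l.elim0
  | succ k ih =>
    rintro u n hu ⟨l0, hl0⟩
    rw [Fin.sum_univ_castSucc]
    by_cases hlast : 0 < n (Fin.last k)
    · by_cases hex : ∃ j : Fin k, 0 < n j.castSucc
      · exact hadd _ (ih _ _ (fun j => hu _) hex) _ (stmt17aux_nsmul_mem hadd (hu _) hlast)
      · have hz : ∀ j : Fin k, n j.castSucc = 0 :=
          fun j => Nat.eq_zero_of_not_pos (fun h => hex ⟨j, h⟩)
        have h0 : ∑ j : Fin k, n j.castSucc • u j.castSucc = 0 :=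
          Finset.sum_eq_zero (fun j _ => by rw [hz j, zero_nsmul])
        rw [h0, zero_add]
        exact stmt17aux_nsmul_mem hadd (hu _) hlast
    · have hnl : n (Fin.last k) = 0 := Nat.eq_zero_of_not_pos hlast
      have hex : ∃ j : Fin k, 0 < n j.castSucc := by
        rcases Fin.eq_castSucc_or_eq_last l0 with ⟨j, rfl⟩ | rfl
        · exact ⟨j, hl0⟩
        · omega
      rw [hnl, zero_nsmul, add_zero]
      exact ih _ _ (fun j => hu _) hex

end ConeLemmas

lemma stmt17aux_interior_closure_subset {V : Type*} [NormedAddCommGroup V] [NormedSpace ℝ V]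
    {C : Set V} (hC : Convex ℝ C) {x₀ : V} (hx₀ : x₀ ∈ interior C) :
    interior (closure C) ⊆ interior C := by
  intro σ hσ
  have hcont : ContinuousAt (fun t : ℝ => σ + t • (σ - x₀)) 0 := by fun_prop
  have h0 : σ + (0 : ℝ) • (σ - x₀) = σ := by simp
  have hev : ∀ᶠ t in nhds (0 : ℝ), σ + t • (σ - x₀) ∈ closure C := by
    refine hcont.eventually_mem ?_
    rw [h0]
    exact Filter.mem_of_superset (isOpen_interior.mem_nhds hσ) interior_subset
  obtain ⟨δ, hδ, hball⟩ := Metric.eventually_nhds_iff.mp hev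
  set t : ℝ := δ / 2 with ht
  have htpos : 0 < t := by positivity
  have hy : σ + t • (σ - x₀) ∈ closure C := by
    apply hball
    rw [Real.dist_eq, sub_zero, abs_of_pos htpos]
    rw [ht]; linarith
  have h1t : (0:ℝ) < 1 + t := by linarith
  have hseg : σ ∈ openSegment ℝ x₀ (σ + t • (σ - x₀)) := by
    have h1t' : (1 + t) ≠ 0 := ne_of_gt h1t
    refine ⟨t / (1 + t), 1 / (1 + t), by positivity, by positivity,
      by field_simp; ring, ?_⟩
    match_scalars <;> field_simp <;> ring
  exact hC.openSegment_interior_closure_subset_interior hx₀ hy hseg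

section RatApprox

variable {m : ℕ}

/-- coercion of a rational vector to a real vector -/
noncomputable def stmt17qr (x : Fin m → ℚ) : Fin m → ℝ := fun l => (x l : ℝ)

lemma stmt17qr_add (x y : Fin m → ℚ) : stmt17qr (x + y) = stmt17qr x + stmt17qr y := by
  funext l; simp [stmt17qr]

lemma stmt17qr_zero : stmt17qr (0 : Fin m → ℚ) = 0 := by
  funext l; simp [stmt17qr]

lemma stmt17qr_smul (t : ℚ) (x : Fin m → ℚ) : stmt17qr (t • x) = (t : ℝ) • stmt17qr x := by
  funext l; simp [stmt17qr]

lemma stmt17qr_dot (x y : Fin m → ℚ) : stmt17qr x ⬝ᵥ stmt17qr y = ((x ⬝ᵥ y : ℚ) : ℝ) := by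
  simp [stmt17qr, dotProduct]

lemma stmt17qr_sum_smul {n : ℕ} (f : Fin n → ℚ) (g : Fin n → (Fin m → ℚ)) :
    stmt17qr (∑ j, f j • g j) = ∑ j, (f j : ℝ) • stmt17qr (g j) := by
  funext l
  simp [stmt17qr, Finset.sum_apply]

noncomputable def stmt17Bq {m : ℕ} : LinearMap.BilinForm ℚ (Fin m → ℚ) :=
  LinearMap.mk₂ ℚ (fun x y => x ⬝ᵥ y)
    (fun x x' y => add_dotProduct x x' y)
    (fun t x y => smul_dotProduct t x y)
    (fun x y y' => dotProduct_add x y y')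
    (fun t x y => dotProduct_smul t x y)

lemma stmt17Bq_apply {m : ℕ} (x y : Fin m → ℚ) : stmt17Bq x y = x ⬝ᵥ y := rfl

lemma stmt17_ratApprox {ι : Type*} [Fintype ι] [DecidableEq ι]
    (a : Fin m → ι → ℚ) (d : ι → ℚ) (c : Fin m → ℝ)
    (hc : ∀ l, 0 < c l) (heq : ∀ i, (d i : ℝ) = ∑ l, c l * (a l i : ℝ)) :
    ∃ q : Fin m → ℚ, (∀ l, 0 < q l) ∧ ∀ i, d i = ∑ l, q l * a l i := by
  classical
  rcases Nat.eq_zero_or_pos m with hm | hm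
  · subst hm
    refine ⟨fun l => l.elim0, fun l => l.elim0, fun i => ?_⟩
    have h := heq i
    simp only [Finset.univ_eq_empty, Finset.sum_empty] at h ⊢
    exact_mod_cast h
  -- Step 1: d lies in the ℚ-span of the a l
  have hdspan : d ∈ span ℚ (Set.range a) := by
    by_contra hd
    have hq0 : Submodule.Quotient.mk (p := span ℚ (Set.range a)) d ≠ 0 := by
      simpa [Submodule.Quotient.mk_eq_zero] using hd
    have hnf : ¬ ∀ φ : Module.Dual ℚ _, φ (Submodule.Quotient.mk (p := span ℚ (Set.range a)) d) = 0 := by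
      rw [Module.forall_dual_apply_eq_zero_iff]; exact hq0
    obtain ⟨f, hf⟩ := not_forall.mp hnf
    set φ : (ι → ℚ) →ₗ[ℚ] ℚ := f ∘ₗ (span ℚ (Set.range a)).mkQ with hφ
    have hφa : ∀ l, φ (a l) = 0 := by
      intro l
      have hmk : (span ℚ (Set.range a)).mkQ (a l) = 0 := by
        rw [Submodule.mkQ_apply, Submodule.Quotient.mk_eq_zero]
        exact subset_span ⟨l, rfl⟩
      simp [hφ, hmk]
    have hφd : φ d ≠ 0 := by simpa [hφ] using hf
    have hrepφ : ∀ x : ι → ℚ, φ x = ∑ i, x i * φ (Pi.single i 1) := by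
      intro x
      have hx : x = ∑ i, x i • (Pi.single i (1 : ℚ) : ι → ℚ) := by
        funext j
        simp [Pi.single_apply, Finset.sum_apply]
      conv_lhs => rw [hx]
      rw [map_sum]
      simp [smul_eq_mul]
    have hcast : ((φ d : ℚ) : ℝ) = 0 := by
      have h1 : ((φ d : ℚ) : ℝ) = ∑ i, (d i : ℝ) * ((φ (Pi.single i 1) : ℚ) : ℝ) := by
        rw [hrepφ]; push_cast; rfl
      rw [h1]
      have h2 : ∀ i ∈ Finset.univ, (d i : ℝ) * ((φ (Pi.single i 1) : ℚ) : ℝ)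
          = ∑ l, c l * ((a l i : ℝ) * ((φ (Pi.single i 1) : ℚ) : ℝ)) := by
        intro i _
        rw [heq i, Finset.sum_mul]
        exact Finset.sum_congr rfl (fun l _ => by ring)
      rw [Finset.sum_congr rfl h2, Finset.sum_comm]
      have h3 : ∀ l ∈ Finset.univ, ∑ i, c l * ((a l i : ℝ) * ((φ (Pi.single i 1) : ℚ) : ℝ)) = 0 := by
        intro l _
        rw [← Finset.mul_sum]
        have h4 : ∑ i, (a l i : ℝ) * ((φ (Pi.single i 1) : ℚ) : ℝ) = ((φ (a l) : ℚ) : ℝ) := by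
          rw [hrepφ (a l)]; push_cast; rfl
        rw [h4, hφa l]
        simp
      rw [Finset.sum_congr rfl h3]
      simp
    exact hφd (by exact_mod_cast hcast)
  obtain ⟨q₀, hq₀⟩ := (mem_span_range_iff_exists_fun ℚ).mp hdspan
  -- bilinear form and orthogonal complement over ℚ
  set row : ι → (Fin m → ℚ) := fun i l => a l i with hrow
  set R : Submodule ℚ (Fin m → ℚ) := span ℚ (Set.range row) with hR
  set Kq : Submodule ℚ (Fin m → ℚ) := (stmt17Bq (m := m)).orthogonal R with hKq
  have hRefl : (stmt17Bq (m := m)).IsRefl := by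
    intro x y h
    have h' : x ⬝ᵥ y = 0 := h
    show y ⬝ᵥ x = 0
    rwa [dotProduct_comm]
  have hNon : ((stmt17Bq (m := m)).restrict R).Nondegenerate := by
    constructor <;>
    ( intro x hx
      have h1 : (x : Fin m → ℚ) ⬝ᵥ (x : Fin m → ℚ) = 0 := hx x
      exact Subtype.ext (dotProduct_self_eq_zero.mp h1))
  have hsup : R ⊔ Kq = ⊤ :=
    (LinearMap.BilinForm.isCompl_orthogonal_of_restrict_nondegenerate hRefl hNon).sup_eq_top
  have hKort : ∀ x ∈ Kq, ∀ r ∈ R, r ⬝ᵥ x = 0 := by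
    intro x hx r hr
    exact (LinearMap.BilinForm.mem_orthogonal_iff.mp hx) r hr
  have hKker : ∀ x ∈ Kq, ∀ i, row i ⬝ᵥ x = 0 :=
    fun x hx i => hKort x hx (row i) (subset_span ⟨i, rfl⟩)
  -- real spans
  set F : Submodule ℝ (Fin m → ℝ) := span ℝ (stmt17qr '' (R : Set _)) with hF
  set E : Submodule ℝ (Fin m → ℝ) := span ℝ (stmt17qr '' (Kq : Set _)) with hE
  have htop : F ⊔ E = ⊤ := by
    rw [eq_top_iff]
    intro x _
    have hx : x = ∑ l, x l • (Pi.single l (1 : ℝ) : Fin m → ℝ) := by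
      funext j
      simp [Pi.single_apply, Finset.sum_apply]
    rw [hx]
    refine Submodule.sum_mem _ (fun l _ => Submodule.smul_mem _ _ ?_)
    have hsingle : (Pi.single l (1 : ℝ)) = stmt17qr (Pi.single l (1 : ℚ)) := by
      funext j
      by_cases h : j = l <;> simp [stmt17qr, Pi.single_apply, h]
    rw [hsingle]
    have hmem : Pi.single l (1 : ℚ) ∈ R ⊔ Kq := hsup ▸ Submodule.mem_top
    obtain ⟨r, hr, k, hk, hrk⟩ := Submodule.mem_sup.mp hmem
    rw [← hrk, stmt17qr_add]
    exact Submodule.add_mem _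
      (Submodule.mem_sup_left (subset_span ⟨r, hr, rfl⟩))
      (Submodule.mem_sup_right (subset_span ⟨k, hk, rfl⟩))
  set v : Fin m → ℝ := c - stmt17qr q₀ with hv
  have hq₀i : ∀ i, ∑ l, q₀ l * a l i = d i := by
    intro i
    have := congrFun hq₀ i
    simpa [Finset.sum_apply] using this
  have hrowsol : ∀ i, stmt17qr (row i) ⬝ᵥ v = 0 := by
    intro i
    have h1 : stmt17qr (row i) ⬝ᵥ c = (d i : ℝ) := by
      rw [heq i]
      simp [stmt17qr, dotProduct, hrow, mul_comm]
    have h2 : stmt17qr (row i) ⬝ᵥ stmt17qr q₀ = (d i : ℝ) := by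
      rw [stmt17qr_dot]
      have : row i ⬝ᵥ q₀ = d i := by
        rw [← hq₀i i]
        simp [dotProduct, hrow, mul_comm]
      rw [this]
    rw [hv, dotProduct_sub, h1, h2, sub_self]
  -- v is orthogonal to F
  have hFgen : ∀ r ∈ R, stmt17qr r ⬝ᵥ v = 0 := by
    intro r hr
    induction hr using Submodule.span_induction with
    | mem x h =>
      obtain ⟨i, rfl⟩ := h
      exact hrowsol i
    | zero => rw [stmt17qr_zero, zero_dotProduct]
    | add x y hx hy ihx ihy => rw [stmt17qr_add, add_dotProduct, ihx, ihy, add_zero]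
    | smul t x hx ihx => rw [stmt17qr_smul, smul_dotProduct, ihx, smul_zero]
  have hFv : ∀ x ∈ F, x ⬝ᵥ v = 0 := by
    intro x hx
    induction hx using Submodule.span_induction with
    | mem x h =>
      obtain ⟨r, hr, rfl⟩ := h
      exact hFgen r hr
    | zero => rw [zero_dotProduct]
    | add x y hx hy ihx ihy => rw [add_dotProduct, ihx, ihy, add_zero]
    | smul t x hx ihx => rw [smul_dotProduct, ihx, smul_zero]
  -- E is orthogonal to F
  have hREbase : ∀ r ∈ R, ∀ k ∈ Kq, stmt17qr r ⬝ᵥ stmt17qr k = 0 := by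
    intro r hr k hk
    rw [stmt17qr_dot, hKort k hk r hr]
    simp
  have hRE : ∀ r ∈ R, ∀ y ∈ E, stmt17qr r ⬝ᵥ y = 0 := by
    intro r hr y hy
    induction hy using Submodule.span_induction with
    | mem x h =>
      obtain ⟨k, hk, rfl⟩ := h
      exact hREbase r hr k hk
    | zero => rw [dotProduct_zero]
    | add x y hx hy ihx ihy => rw [dotProduct_add, ihx, ihy, add_zero]
    | smul t x hx ihx => rw [dotProduct_smul, ihx, smul_zero]
  have hFE : ∀ x ∈ F, ∀ y ∈ E, x ⬝ᵥ y = 0 := by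
    intro x hx y hy
    induction hx using Submodule.span_induction with
    | mem x h =>
      obtain ⟨r, hr, rfl⟩ := h
      exact hRE r hr y hy
    | zero => rw [zero_dotProduct]
    | add x y' hx hy' ihx ihy => rw [add_dotProduct, ihx, ihy, add_zero]
    | smul t x hx ihx => rw [smul_dotProduct, ihx, smul_zero]
  -- v belongs to E
  have hvE : v ∈ E := by
    have hvtop : v ∈ F ⊔ E := htop ▸ Submodule.mem_top
    obtain ⟨f, hf, e, he, hfe⟩ := Submodule.mem_sup.mp hvtop
    have h1 : f ⬝ᵥ v = 0 := hFv f hf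
    have h2 : f ⬝ᵥ e = 0 := hFE f hf e he
    rw [← hfe, dotProduct_add, h2, add_zero] at h1
    have hf0 : f = 0 := dotProduct_self_eq_zero.mp h1
    rw [← hfe, hf0, zero_add]
    exact he
  -- density of rational points
  haveI hne : Nonempty (Fin m) := Fin.pos_iff_nonempty.mp hm
  set δ : ℝ := Finset.univ.inf' Finset.univ_nonempty c with hδdef
  have hδpos : 0 < δ := by
    rw [hδdef, Finset.lt_inf'_iff]
    exact fun l _ => hc l
  obtain ⟨z, hzK, hznear⟩ : ∃ z ∈ Kq, ‖stmt17qr z - v‖ < δ := by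
    obtain ⟨n, f, g, hg⟩ := Submodule.mem_span_set'.mp (hE ▸ hvE)
    choose k hkK hkq using fun j => (g j).2
    rcases Nat.eq_zero_or_pos n with hn | hn
    · subst hn
      refine ⟨0, Submodule.zero_mem _, ?_⟩
      rw [stmt17qr_zero, ← hg]
      simp [hδpos]
    · haveI : Nonempty (Fin n) := Fin.pos_iff_nonempty.mp hn
      have hbound : ∀ j : Fin n, 0 < δ / (n * (‖stmt17qr (k j)‖ + 1)) := by
        intro j
        have : (0:ℝ) < n := by exact_mod_cast hn
        have h1 : (0:ℝ) < ‖stmt17qr (k j)‖ + 1 := by positivity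
        positivity
      choose qq hqq using fun j => exists_rat_near (f j) (hbound j)
      refine ⟨∑ j, qq j • k j,
        Submodule.sum_mem _ (fun j _ => Submodule.smul_mem _ _ (hkK j)), ?_⟩
      rw [stmt17qr_sum_smul, ← hg]
      have hdiff : ∑ j, (qq j : ℝ) • stmt17qr (k j) - ∑ j, f j • ((g j : Fin m → ℝ))
          = ∑ j, ((qq j : ℝ) - f j) • stmt17qr (k j) := by
        rw [← Finset.sum_sub_distrib]
        refine Finset.sum_congr rfl (fun j _ => ?_)
        rw [← hkq j, sub_smul]
      rw [hdiff]
      have hnR : (0:ℝ) < n := by exact_mod_cast hn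
      calc ‖∑ j, ((qq j : ℝ) - f j) • stmt17qr (k j)‖
          ≤ ∑ j, ‖((qq j : ℝ) - f j) • stmt17qr (k j)‖ := norm_sum_le _ _
        _ = ∑ j, |(qq j : ℝ) - f j| * ‖stmt17qr (k j)‖ := by
            refine Finset.sum_congr rfl (fun j _ => ?_)
            rw [norm_smul, Real.norm_eq_abs]
        _ < ∑ _j : Fin n, δ / n := by
            refine Finset.sum_lt_sum_of_nonempty Finset.univ_nonempty ?_
            intro j _
            have h1 : |(qq j : ℝ) - f j| < δ / (n * (‖stmt17qr (k j)‖ + 1)) := by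
              rw [abs_sub_comm]; exact hqq j
            have h2 : ‖stmt17qr (k j)‖ ≥ 0 := norm_nonneg _
            calc |(qq j : ℝ) - f j| * ‖stmt17qr (k j)‖
                ≤ (δ / (n * (‖stmt17qr (k j)‖ + 1))) * ‖stmt17qr (k j)‖ :=
                  mul_le_mul_of_nonneg_right (le_of_lt h1) h2
              _ < δ / n := by
                  rw [div_mul_eq_mul_div, div_lt_div_iff₀ (by positivity) hnR]
                  nlinarith [hδpos, h2, hnR]
        _ = δ := by
            rw [Finset.sum_const, Finset.card_univ, Fintype.card_fin, nsmul_eq_mul]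
            field_simp
  -- conclude
  refine ⟨fun l => q₀ l + z l, ?_, ?_⟩
  · intro l
    have h1 : ((q₀ l + z l : ℚ) : ℝ) = c l + ((stmt17qr z - v) l) := by
      simp only [hv, Pi.sub_apply, stmt17qr]
      push_cast
      ring
    have h2 : |(stmt17qr z - v) l| < δ := by
      calc |(stmt17qr z - v) l| = ‖(stmt17qr z - v) l‖ := (Real.norm_eq_abs _).symm
        _ ≤ ‖stmt17qr z - v‖ := norm_le_pi_norm _ l
        _ < δ := hznear
    have h3 : δ ≤ c l := Finset.inf'_le _ (Finset.mem_univ l)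
    have h4 : 0 < ((q₀ l + z l : ℚ) : ℝ) := by
      rw [h1]
      have := abs_lt.mp h2
      linarith [this.1]
    exact_mod_cast h4
  · intro i
    have hz0 : ∑ l, z l * a l i = 0 := by
      have := hKker z hzK i
      rw [show row i ⬝ᵥ z = ∑ l, a l i * z l from rfl] at this
      rw [← this]
      exact Finset.sum_congr rfl (fun l _ => mul_comm _ _)
    calc d i = ∑ l, q₀ l * a l i + ∑ l, z l * a l i := by rw [hq₀i i, hz0, add_zero]
      _ = ∑ l, (q₀ l + z l) * a l i := by
          rw [← Finset.sum_add_distrib]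
          exact Finset.sum_congr rfl (fun l _ => by ring)

end RatApprox

theorem stmt17 {V : Type*} [NormedAddCommGroup V] [NormedSpace ℝ V] [FiniteDimensional ℝ V]
    (deg : V →ₗ[ℝ] ℝ) (hsurj : Function.Surjective deg)
    (S : Set V) (hne : S.Nonempty) (hadd : ∀ x ∈ S, ∀ y ∈ S, x + y ∈ S)
    (hint : ∀ x ∈ S, ∃ m : ℤ, deg x = (m : ℝ))
    (hlb : LinBddV deg S)
    (hdisc : DiscreteTopology ↥(AddSubgroup.closure S)) :
    ∀ σ ∈ (AddSubgroup.closure S : Set V), σ ∈ interior (closure (coneGen S)) →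
      ∃ k : ℕ, 0 < k ∧ k • σ ∈ S := by
  classical
  intro σ hσL hσint
  set C := coneGen S with hC
  have hCconv : Convex ℝ C := stmt17aux_coneGen_convex
  -- span ℝ S = ⊤
  have hCsub : C ⊆ (span ℝ S : Set V) := by
    rintro x ⟨m, c, y, hc, hy, rfl⟩
    exact Submodule.sum_mem _ (fun i _ => Submodule.smul_mem _ _ (subset_span (hy i)))
  have hclosC : closure C ⊆ (span ℝ S : Set V) :=
    closure_minimal hCsub (Submodule.closed_of_finiteDimensional _)
  have hspan : span ℝ S = ⊤ := by
    haveI : (nhdsWithin (0:ℝ) {x : ℝ | IsUnit x}).NeBot := NormedField.nhdsWithin_isUnit_neBot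
    exact Submodule.eq_top_of_nonempty_interior' _ ⟨σ, interior_mono hclosC hσint⟩
  -- interior of C is nonempty
  have haffcl : affineSpan ℝ (closure C) = ⊤ := by
    apply affineSpan_eq_top_of_nonempty_interior
    rw [hCconv.closure.convexHull_eq]
    exact ⟨σ, hσint⟩
  have haffC : affineSpan ℝ C = ⊤ := by
    rw [eq_top_iff, ← haffcl]
    apply affineSpan_le.mpr
    exact closure_minimal (subset_affineSpan ℝ C) (AffineSubspace.closed_of_finiteDimensional _)
  obtain ⟨x₀, hx₀⟩ := (hCconv.interior_nonempty_iff_affineSpan_eq_top).mpr haffC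
  have hσC : σ ∈ C :=
    interior_subset (stmt17aux_interior_closure_subset hCconv hx₀ hσint)
  -- deg σ > 0, hence σ ≠ 0
  have hdegC : ∀ x ∈ closure C, 0 ≤ deg x := by
    obtain ⟨vb, _, hvb, hsub⟩ := hlb
    have hCdeg : C ⊆ deg ⁻¹' (Set.Ici 0) := by
      rintro x ⟨m, c, y, hc, hy, rfl⟩
      simp only [Set.mem_preimage, Set.mem_Ici, map_sum, _root_.map_smul, smul_eq_mul]
      refine Finset.sum_nonneg (fun i _ => mul_nonneg (hc i) ?_)
      obtain ⟨cc, hcc, hyy⟩ := hsub (hy i)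
      rw [hyy]
      simp only [map_sum, _root_.map_smul, smul_eq_mul]
      exact Finset.sum_nonneg (fun j _ => mul_nonneg (hcc j) (le_of_lt (hvb j)))
    intro x hx
    exact closure_minimal hCdeg
      (IsClosed.preimage deg.continuous_of_finiteDimensional isClosed_Ici) hx
  have hdegσ : 0 < deg σ := by
    obtain ⟨y, hy⟩ := hsurj (-1)
    have hcont : ContinuousAt (fun t : ℝ => σ + t • y) 0 := by fun_prop
    have hev : ∀ᶠ t in nhds (0 : ℝ), σ + t • y ∈ closure C := by
      refine hcont.eventually_mem ?_
      simp only [zero_smul, add_zero]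
      exact Filter.mem_of_superset (isOpen_interior.mem_nhds hσint) interior_subset
    obtain ⟨δ, hδpos, hball⟩ := Metric.eventually_nhds_iff.mp hev
    have hmem : σ + (δ/2) • y ∈ closure C := by
      apply hball
      rw [Real.dist_eq, sub_zero, abs_of_pos (by positivity : (0:ℝ) < δ/2)]
      linarith
    have := hdegC _ hmem
    rw [map_add, _root_.map_smul, hy, smul_eq_mul] at this
    linarith
  have hσne : σ ≠ 0 := by
    intro h
    rw [h, map_zero] at hdegσ
    exact lt_irrefl 0 hdegσ
  -- representation with positive coefficients
  obtain ⟨m₀, c₀, t, hc₀, ht, hrep⟩ := hσC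
  set T : Finset (Fin m₀) := Finset.univ.filter (fun j => 0 < c₀ j) with hT
  have hrep2 : σ = ∑ j ∈ T, c₀ j • t j := by
    rw [hrep]
    symm
    apply Finset.sum_subset (Finset.subset_univ T)
    intro j _ hj
    have : c₀ j = 0 := by
      by_contra h
      exact hj (Finset.mem_filter.mpr ⟨Finset.mem_univ j, lt_of_le_of_ne (hc₀ j) (Ne.symm h)⟩)
    rw [this, zero_smul]
  set m : ℕ := T.card with hmdef
  set e : ↥T ≃ Fin m := T.equivFin with he
  set u : Fin m → V := fun l => t ((e.symm l) : Fin m₀) with hu_def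
  set c : Fin m → ℝ := fun l => c₀ ((e.symm l) : Fin m₀) with hc_def
  have hcpos : ∀ l, 0 < c l := by
    intro l
    exact (Finset.mem_filter.mp (e.symm l).2).2
  have huS : ∀ l, u l ∈ S := fun l => ht _
  have hrep3 : σ = ∑ l, c l • u l := by
    rw [hrep2, ← Finset.sum_coe_sort T (fun j => c₀ j • t j)]
    rw [← Equiv.sum_comp e.symm (fun j => c₀ (j : Fin m₀) • t (j : Fin m₀))]
  have hmpos : 0 < m := by
    rcases Nat.eq_zero_or_pos m with h | h
    · exfalso
      apply hσne
      rw [hrep3]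
      haveI : IsEmpty (Fin m) := by rw [h]; infer_instance
      simp
    · exact h
  -- the lattice
  set L' : Submodule ℤ V := AddSubgroup.toIntSubmodule (AddSubgroup.closure S) with hL'
  haveI hdisc' : DiscreteTopology L' := hdisc
  haveI : IsZLattice ℝ L' := by
    constructor
    rw [eq_top_iff, ← hspan]
    apply Submodule.span_le.mpr
    intro x hx
    exact subset_span (AddSubgroup.subset_closure hx)
  haveI := ZLattice.module_finite ℝ L'
  haveI := ZLattice.module_free ℝ L'
  set ι := Module.Free.ChooseBasisIndex ℤ L' with hι
  set b : Module.Basis ι ℤ L' := Module.Free.chooseBasis ℤ L' with hb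
  set BB : Module.Basis ι ℝ V := b.ofZLatticeBasis ℝ L' with hBB
  -- integer coordinates
  have hcoords : ∀ x, x ∈ AddSubgroup.closure S → ∃ z : ι → ℤ, x = ∑ i, ((z i : ℝ)) • BB i := by
    intro x hx
    have hx' : x ∈ span ℤ (Set.range BB) := by
      rw [hBB, Module.Basis.ofZLatticeBasis_span]
      exact hx
    obtain ⟨z, hz⟩ := (mem_span_range_iff_exists_fun ℤ).mp hx'
    refine ⟨z, ?_⟩
    rw [← hz]
    exact Finset.sum_congr rfl (fun i _ => (Int.cast_smul_eq_zsmul ℝ (z i) (BB i)).symm)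
  have hreprsum : ∀ (f : ι → ℝ) (j : ι), BB.repr (∑ i, f i • BB i) j = f j := by
    intro f j
    rw [map_sum]
    rw [Finsupp.finset_sum_apply]
    rw [Finset.sum_congr rfl (fun i _ => by rw [_root_.map_smul, BB.repr_self, Finsupp.smul_apply,
      Finsupp.single_apply, smul_eq_mul])]
    simp
  obtain ⟨dz, hdz⟩ := hcoords σ hσL
  choose az haz using fun l => hcoords (u l) (AddSubgroup.subset_closure (huS l))
  have hreprσ : ∀ i, BB.repr σ i = (dz i : ℝ) := by
    intro i
    conv_lhs => rw [hdz]
    exact hreprsum _ i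
  have hrepru : ∀ l i, BB.repr (u l) i = (az l i : ℝ) := by
    intro l i
    conv_lhs => rw [haz l]
    exact hreprsum _ i
  have heqR : ∀ i, ((dz i : ℝ)) = ∑ l, c l * (az l i : ℝ) := by
    intro i
    rw [← hreprσ i]
    conv_lhs => rw [hrep3]
    rw [map_sum, Finsupp.finset_sum_apply]
    exact Finset.sum_congr rfl (fun l _ => by
      rw [_root_.map_smul, Finsupp.smul_apply, smul_eq_mul, hrepru l i])
  -- apply rational approximation
  have heqQ : ∀ i, (((fun i => ((dz i : ℚ))) i : ℚ) : ℝ)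
      = ∑ l, c l * (((fun l i => ((az l i : ℚ))) l i : ℚ) : ℝ) := by
    intro i
    push_cast
    exact heqR i
  obtain ⟨q, hqpos, hqeq⟩ :=
    stmt17_ratApprox (fun l i => ((az l i : ℚ))) (fun i => ((dz i : ℚ))) c hcpos heqQ
  -- integerize
  set N : ℕ := ∏ l, (q l).den with hNdef
  have hNpos : 0 < N := Finset.prod_pos (fun l _ => (q l).pos)
  have hqN : ∀ l, ∃ nl : ℕ, 0 < nl ∧ (nl : ℚ) = q l * N := by
    intro l
    obtain ⟨en, hen⟩ := Finset.dvd_prod_of_mem (fun l => (q l).den) (Finset.mem_univ l)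
    have henpos : 0 < en := by
      rcases Nat.eq_zero_or_pos en with h | h
      · exfalso
        rw [← hNdef, h, mul_zero] at hen
        omega
      · exact h
    refine ⟨(q l).num.toNat * en, ?_, ?_⟩
    · have hnum : 0 < (q l).num := Rat.num_pos.mpr (hqpos l)
      have : 0 < (q l).num.toNat := by omega
      positivity
    · have hnum : 0 ≤ (q l).num := le_of_lt (Rat.num_pos.mpr (hqpos l))
      have h1 : ((q l).num.toNat : ℚ) = ((q l).num : ℚ) := by
        exact_mod_cast Int.toNat_of_nonneg hnum
      push_cast [h1]
      rw [← hNdef] at hen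
      rw [hen]
      push_cast
      rw [← mul_assoc]
      congr 1
      rw [mul_comm (q l) _, ← Rat.mul_den_eq_num]
      ring
  choose nn hnnpos hnn using hqN
  refine ⟨N, hNpos, ?_⟩
  have hkey : N • σ = ∑ l, nn l • u l := by
    have hscal : ∀ i, (N : ℝ) * (dz i : ℝ) = ∑ l, (nn l : ℝ) * (az l i : ℝ) := by
      intro i
      have hQ : ((dz i : ℚ)) * N = ∑ l, (nn l : ℚ) * ((az l i : ℚ)) := by
        calc ((dz i : ℚ)) * N = (∑ l, q l * ((az l i : ℚ))) * N := by rw [← hqeq i]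
          _ = ∑ l, (q l * N) * ((az l i : ℚ)) := by
              rw [Finset.sum_mul]
              exact Finset.sum_congr rfl (fun l _ => by ring)
          _ = ∑ l, (nn l : ℚ) * ((az l i : ℚ)) := by
              exact Finset.sum_congr rfl (fun l _ => by rw [hnn l])
      have := congrArg (fun x : ℚ => (x : ℝ)) hQ
      push_cast at this
      rw [mul_comm]
      convert this using 2
    have hLHS : N • σ = ∑ i, ((N : ℝ) * (dz i : ℝ)) • BB i := by
      conv_lhs => rw [hdz]
      rw [Finset.smul_sum]
      exact Finset.sum_congr rfl (fun i _ => by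
        rw [← Nat.cast_smul_eq_nsmul ℝ N, smul_smul])
    have hRHS : ∑ l, nn l • u l = ∑ i, (∑ l, (nn l : ℝ) * (az l i : ℝ)) • BB i := by
      calc ∑ l, nn l • u l = ∑ l, ∑ i, ((nn l : ℝ) * (az l i : ℝ)) • BB i := by
            refine Finset.sum_congr rfl (fun l _ => ?_)
            conv_lhs => rw [haz l]
            rw [← Nat.cast_smul_eq_nsmul ℝ (nn l), Finset.smul_sum]
            exact Finset.sum_congr rfl (fun i _ => by rw [smul_smul])
        _ = ∑ i, ∑ l, ((nn l : ℝ) * (az l i : ℝ)) • BB i := Finset.sum_comm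
        _ = ∑ i, (∑ l, (nn l : ℝ) * (az l i : ℝ)) • BB i := by
            exact Finset.sum_congr rfl (fun i _ => by rw [Finset.sum_smul])
    rw [hLHS, hRHS]
    exact Finset.sum_congr rfl (fun i _ => by rw [hscal i])
  rw [hkey]
  exact stmt17aux_sum_nsmul_mem hadd u nn huS ⟨⟨0, hmpos⟩, hnnpos _⟩
end
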